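/- (Proposition 1, max-pooling case.) Let H, W ≥ 1 be integers and let (d_{ij}), 1 ≤ i ≤ H, 1 ≤ j ≤ W, be real-valued random variables on a probability space such that E[d_{ij}] = 0 for all i, j and a ≤ d_{ij} ≤ b almost surely, where a < b are real constants. Let γ > 0 and p ∈ [0, 1]. If (b − a) · sqrt( log( sqrt(2·H·W) ) ) / γ ≤ p, then P( | max_{i,j} d_{ij} | ≥ γ ) ≤ p. -/

import Mathlib

open MeasureTheory ProbabilityTheory Real
open scoped ENNReal NNReal

lemma hoeffding_core (q : ℝ) (hq0 : 0 ≤ q) (hq1 : q ≤ 1) (h : ℝ) :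
    (1 - q) + q * Real.exp h ≤ Real.exp (q * h + h ^ 2 / 8) := by
  set D : ℝ → ℝ := fun x => 1 - q + q * Real.exp x with hDdef
  have hD : ∀ x, 0 < D x := by
    intro x
    have hex := Real.exp_pos x
    show 0 < 1 - q + q * Real.exp x
    rcases le_total (Real.exp x) 1 with hx | hx
    · nlinarith
    · nlinarith
  set f1 : ℝ → ℝ := fun x => q + x / 4 - q * Real.exp x / D x with hf1def
  set g : ℝ → ℝ := fun x => q * x + x ^ 2 / 8 - Real.log (D x) with hgdef
  have hDD : ∀ x, HasDerivAt D (q * Real.exp x) x := by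
    intro x
    exact ((Real.hasDerivAt_exp x).const_mul q).const_add (1 - q)
  have hg : ∀ x, HasDerivAt g (f1 x) x := by
    intro x
    have h1 : HasDerivAt (fun x : ℝ => q * x) q x := by
      simpa using (hasDerivAt_id x).const_mul q
    have h2 : HasDerivAt (fun x : ℝ => x ^ 2 / 8) (x / 4) x := by
      have := (hasDerivAt_pow 2 x).div_const 8
      refine this.congr_deriv ?_
      norm_num
      ring
    have h3 : HasDerivAt (fun x => Real.log (D x)) (q * Real.exp x / D x) x :=
      (hDD x).log (hD x).ne'
    have := (h1.add h2).sub h3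
    exact this
  have hf1 : ∀ x, HasDerivAt f1 (1 / 4 - q * (1 - q) * Real.exp x / (D x) ^ 2) x := by
    intro x
    have h1 : HasDerivAt (fun x : ℝ => q + x / 4) (1 / 4) x := by
      simpa using ((hasDerivAt_id x).div_const 4).const_add q
    have h2 : HasDerivAt (fun x => q * Real.exp x / D x)
        ((q * Real.exp x * D x - q * Real.exp x * (q * Real.exp x)) / (D x) ^ 2) x :=
      ((Real.hasDerivAt_exp x).const_mul q).div (hDD x) (hD x).ne'
    have := h1.sub h2
    refine this.congr_deriv ?_
    have hDx := (hD x).ne'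
    rw [show D x = 1 - q + q * Real.exp x from rfl]
    ring
  have hf2 : ∀ x, 0 ≤ 1 / 4 - q * (1 - q) * Real.exp x / (D x) ^ 2 := by
    intro x
    have hDx := hD x
    rw [sub_nonneg, div_le_iff₀ (by positivity)]
    have : D x = 1 - q + q * Real.exp x := rfl
    nlinarith [sq_nonneg (1 - q - q * Real.exp x), Real.exp_pos x]
  have hmono : Monotone f1 := by
    apply monotone_of_deriv_nonneg (fun x => (hf1 x).differentiableAt)
    intro x
    rw [(hf1 x).deriv]
    exact hf2 x
  have hf10 : f1 0 = 0 := by simp [hf1def, hDdef]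
  have hg0 : g 0 = 0 := by simp [hgdef, hDdef]
  have hgpos : ∀ x, 0 ≤ g x := by
    intro x
    rcases le_total 0 x with hx | hx
    · have : MonotoneOn g (Set.Ici 0) := by
        apply monotoneOn_of_deriv_nonneg (convex_Ici 0)
          (fun y _ => (hg y).differentiableAt.continuousAt.continuousWithinAt)
          (fun y _ => (hg y).differentiableAt.differentiableWithinAt)
        intro y hy
        rw [(hg y).deriv]
        rw [interior_Ici] at hy
        have := hmono (le_of_lt hy)
        rw [hf10] at this
        exact this
      have := this (Set.self_mem_Ici) hx hx
      rwa [hg0] at this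
    · have : AntitoneOn g (Set.Iic 0) := by
        apply antitoneOn_of_deriv_nonpos (convex_Iic 0)
          (fun y _ => (hg y).differentiableAt.continuousAt.continuousWithinAt)
          (fun y _ => (hg y).differentiableAt.differentiableWithinAt)
        intro y hy
        rw [(hg y).deriv]
        rw [interior_Iic] at hy
        have := hmono (le_of_lt hy)
        rw [hf10] at this
        exact this
      have := this hx (Set.self_mem_Iic) hx
      rwa [hg0] at this
  have := hgpos h
  have hlog : Real.log (D h) ≤ q * h + h ^ 2 / 8 := by
    simp only [hgdef] at this; linarith
  exact (Real.log_le_iff_le_exp (hD h)).mp hlog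

lemma mgf_bound {Ω : Type*} [MeasurableSpace Ω] (μ : Measure Ω) [IsProbabilityMeasure μ]
    {X : Ω → ℝ} (hX : Measurable X) (hmean : ∫ ω, X ω ∂μ = 0) {a b : ℝ} (hab : a < b)
    (hb : ∀ᵐ ω ∂μ, a ≤ X ω ∧ X ω ≤ b) (t : ℝ) :
    ∫ ω, Real.exp (t * X ω) ∂μ ≤ Real.exp (t ^ 2 * (b - a) ^ 2 / 8) := by
  have hba : (0:ℝ) < b - a := sub_pos.mpr hab
  have hXint : Integrable X μ := by
    refine (integrable_const (max |a| |b|)).mono' hX.aestronglyMeasurable ?_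
    filter_upwards [hb] with ω ⟨h1, h2⟩
    exact abs_le_max_abs_abs h1 h2
  have hEint : Integrable (fun ω => Real.exp (t * X ω)) μ := by
    refine (integrable_const (Real.exp (|t| * (|a| + |b|)))).mono'
      (hX.const_mul t).exp.aestronglyMeasurable ?_
    filter_upwards [hb] with ω ⟨h1, h2⟩
    rw [Real.norm_eq_abs, Real.abs_exp]
    apply Real.exp_le_exp.mpr
    have hXa : |X ω| ≤ |a| + |b| := (abs_le_max_abs_abs h1 h2).trans (max_le_add_of_nonneg (abs_nonneg _) (abs_nonneg _))
    calc t * X ω ≤ |t * X ω| := le_abs_self _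
      _ = |t| * |X ω| := abs_mul _ _
      _ ≤ |t| * (|a| + |b|) := by
          exact mul_le_mul_of_nonneg_left hXa (abs_nonneg t)
  have ha0 : a ≤ 0 := by
    have : ∫ _ : Ω, a ∂μ ≤ ∫ ω, X ω ∂μ :=
      integral_mono_ae (integrable_const a) hXint (by filter_upwards [hb] with ω h; exact h.1)
    simpa [hmean] using this
  have hb0 : 0 ≤ b := by
    have : ∫ ω, X ω ∂μ ≤ ∫ _ : Ω, b ∂μ :=
      integral_mono_ae hXint (integrable_const b) (by filter_upwards [hb] with ω h; exact h.2)
    simpa [hmean] using this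
  set c1 : ℝ := (b * Real.exp (t * a) - a * Real.exp (t * b)) / (b - a) with hc1
  set c2 : ℝ := (Real.exp (t * b) - Real.exp (t * a)) / (b - a) with hc2
  have hpt : ∀ᵐ ω ∂μ, Real.exp (t * X ω) ≤ c1 + c2 * X ω := by
    filter_upwards [hb] with ω ⟨h1, h2⟩
    set x := X ω
    have θnn : 0 ≤ (b - x) / (b - a) := div_nonneg (by linarith) hba.le
    have θ'nn : 0 ≤ (x - a) / (b - a) := div_nonneg (by linarith) hba.le
    have hsum : (b - x) / (b - a) + (x - a) / (b - a) = 1 := by field_simp; ring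
    have hcvx := convexOn_exp.2 (Set.mem_univ (t * a)) (Set.mem_univ (t * b)) θnn θ'nn hsum
    have harg : ((b - x) / (b - a)) • (t * a) + ((x - a) / (b - a)) • (t * b) = t * x := by
      rw [smul_eq_mul, smul_eq_mul, div_mul_eq_mul_div, div_mul_eq_mul_div, ← add_div,
        div_eq_iff hba.ne']
      ring
    rw [harg] at hcvx
    refine hcvx.trans_eq ?_
    simp only [smul_eq_mul, hc1, hc2]
    ring
  have hint : ∫ ω, Real.exp (t * X ω) ∂μ ≤ ∫ ω, c1 + c2 * X ω ∂μ :=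
    integral_mono_ae hEint ((integrable_const c1).add (hXint.const_mul c2)) hpt
  have hval : ∫ ω, c1 + c2 * X ω ∂μ = c1 := by
    rw [integral_add (integrable_const c1) (hXint.const_mul c2), integral_const_mul, hmean]
    simp
  rw [hval] at hint
  refine hint.trans ?_
  set q : ℝ := -a / (b - a) with hq
  have hq0 : 0 ≤ q := div_nonneg (by linarith) hba.le
  have hq1 : q ≤ 1 := by rw [div_le_one hba]; linarith
  have hcore := hoeffding_core q hq0 hq1 (t * (b - a))
  have heq : c1 = Real.exp (t * a) * ((1 - q) + q * Real.exp (t * (b - a))) := by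
    have hebb : Real.exp (t * b) = Real.exp (t * a) * Real.exp (t * (b - a)) := by
      rw [← Real.exp_add]; ring_nf
    rw [hc1, hebb, hq]
    field_simp
    ring
  rw [heq]
  calc Real.exp (t * a) * ((1 - q) + q * Real.exp (t * (b - a)))
      ≤ Real.exp (t * a) * Real.exp (q * (t * (b - a)) + (t * (b - a)) ^ 2 / 8) :=
        mul_le_mul_of_nonneg_left hcore (Real.exp_pos _).le
    _ = Real.exp (t ^ 2 * (b - a) ^ 2 / 8) := by
        rw [← Real.exp_add]
        congr 1
        rw [hq]
        field_simp
        ring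

lemma tail_bound {Ω : Type*} [MeasurableSpace Ω] (μ : Measure Ω) [IsProbabilityMeasure μ]
    {X : Ω → ℝ} (hX : Measurable X) (hmean : ∫ ω, X ω ∂μ = 0) {a b : ℝ} (hab : a < b)
    (hb : ∀ᵐ ω ∂μ, a ≤ X ω ∧ X ω ≤ b) {γ : ℝ} (hγ : 0 < γ) :
    μ {ω | γ ≤ X ω} ≤ ENNReal.ofReal (Real.exp (-(2 * γ ^ 2 / (b - a) ^ 2))) := by
  have hba : (0:ℝ) < b - a := sub_pos.mpr hab
  set t : ℝ := 4 * γ / (b - a) ^ 2 with ht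
  have ht0 : 0 ≤ t := by positivity
  have hEint : Integrable (fun ω => Real.exp (t * X ω)) μ := by
    refine (integrable_const (Real.exp (|t| * (|a| + |b|)))).mono'
      (hX.const_mul t).exp.aestronglyMeasurable ?_
    filter_upwards [hb] with ω ⟨h1, h2⟩
    rw [Real.norm_eq_abs, Real.abs_exp]
    apply Real.exp_le_exp.mpr
    have hXa : |X ω| ≤ |a| + |b| := (abs_le_max_abs_abs h1 h2).trans (max_le_add_of_nonneg (abs_nonneg _) (abs_nonneg _))
    calc t * X ω ≤ |t * X ω| := le_abs_self _
      _ = |t| * |X ω| := abs_mul _ _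
      _ ≤ |t| * (|a| + |b|) := mul_le_mul_of_nonneg_left hXa (abs_nonneg t)
  have hcher := measure_ge_le_exp_mul_mgf (μ := μ) (X := X) γ ht0 hEint
  have hmgf : mgf X μ t ≤ Real.exp (t ^ 2 * (b - a) ^ 2 / 8) :=
    mgf_bound μ hX hmean hab hb t
  have hfinal : (μ {ω | γ ≤ X ω}).toReal ≤ Real.exp (-(2 * γ ^ 2 / (b - a) ^ 2)) := by
    refine hcher.trans ?_
    calc Real.exp (-t * γ) * mgf X μ t
        ≤ Real.exp (-t * γ) * Real.exp (t ^ 2 * (b - a) ^ 2 / 8) :=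
          mul_le_mul_of_nonneg_left hmgf (Real.exp_pos _).le
      _ = Real.exp (-(2 * γ ^ 2 / (b - a) ^ 2)) := by
          rw [← Real.exp_add]
          congr 1
          rw [ht]
          field_simp
          ring
  calc μ {ω | γ ≤ X ω} = ENNReal.ofReal ((μ {ω | γ ≤ X ω}).toReal) := by
        rw [ENNReal.ofReal_toReal (measure_ne_top μ _)]
    _ ≤ ENNReal.ofReal (Real.exp (-(2 * γ ^ 2 / (b - a) ^ 2))) := ENNReal.ofReal_le_ofReal hfinal

set_option maxHeartbeats 1000000 in
lemma arith_bound (H W : ℕ) (hH : 1 ≤ H) (hW : 1 ≤ W) {a b γ p : ℝ} (hab : a < b) (hγ : 0 < γ)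
    (hp1 : p ≤ 1) (hp0 : 0 ≤ p)
    (hcond : (b - a) * Real.sqrt (Real.log (Real.sqrt (2 * H * W))) / γ ≤ p) :
    2 * H * W * Real.exp (-(2 * γ ^ 2 / (b - a) ^ 2)) ≤ p := by
  have hba : (0:ℝ) < b - a := sub_pos.mpr hab
  have hH' : (1:ℝ) ≤ H := by exact_mod_cast hH
  have hW' : (1:ℝ) ≤ W := by exact_mod_cast hW
  have hN : (2:ℝ) ≤ 2 * H * W := by nlinarith
  have hNpos : (0:ℝ) < 2 * H * W := by linarith
  set L : ℝ := Real.log (Real.sqrt (2 * H * W)) with hLdef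
  have hL : L = Real.log (2 * H * W) / 2 := Real.log_sqrt hNpos.le
  have hl2 : Real.log 2 / 2 ≤ L := by
    rw [hL]
    have := Real.log_le_log (by norm_num : (0:ℝ) < 2) hN
    linarith
  have hl2pos : (0:ℝ) < Real.log 2 := Real.log_pos (by norm_num)
  have hLpos : 0 < L := by linarith
  set t : ℝ := Real.sqrt L with htdef
  have ht : 0 < t := Real.sqrt_pos.mpr hLpos
  have ht2 : t ^ 2 = L := Real.sq_sqrt hLpos.le
  have hp : 0 < p := lt_of_lt_of_le (by positivity) hcond
  set s : ℝ := γ / (b - a) with hsdef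
  have hs : 0 < s := by positivity
  have hts : t ≤ p * s := by
    rw [hsdef, mul_div_assoc']
    rw [le_div_iff₀ hba]
    rw [div_le_iff₀ hγ] at hcond
    nlinarith
  have hts2 : t ^ 2 ≤ p ^ 2 * s ^ 2 := by nlinarith
  have hpl : p ^ 2 - p ≤ p ^ 2 * Real.log p := by
    have h1 : -Real.log p ≤ p⁻¹ - 1 := by
      have := Real.log_le_sub_one_of_pos (inv_pos.mpr hp)
      rwa [Real.log_inv] at this
    have h2 : p ^ 2 * (-Real.log p) ≤ p ^ 2 * (p⁻¹ - 1) :=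
      mul_le_mul_of_nonneg_left h1 (sq_nonneg p)
    have h3 : p ^ 2 * (p⁻¹ - 1) = p - p ^ 2 := by
      field_simp
    nlinarith
  have hfact : p - p ^ 2 ≤ Real.log 2 * (1 - p ^ 2) := by
    have hl29 : (0.6931471803 : ℝ) < Real.log 2 := Real.log_two_gt_d9
    have hnn : 0 ≤ Real.log 2 * (1 + p) - p := by nlinarith
    nlinarith [mul_nonneg (sub_nonneg.mpr hp1) hnn]
  have hl2t : Real.log 2 * (1 - p ^ 2) ≤ 2 * t ^ 2 * (1 - p ^ 2) := by
    have : Real.log 2 ≤ 2 * t ^ 2 := by rw [ht2]; linarith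
    exact mul_le_mul_of_nonneg_right this (by nlinarith)
  have key : 2 * t ^ 2 - 2 * s ^ 2 ≤ Real.log p := by
    have step1 : (2 * t ^ 2 - 2 * s ^ 2) * p ^ 2 ≤ Real.log p * p ^ 2 := by nlinarith
    have hp2 : (0:ℝ) < p ^ 2 := by positivity
    exact le_of_mul_le_mul_right step1 hp2
  have h2s : 2 * γ ^ 2 / (b - a) ^ 2 = 2 * s ^ 2 := by
    rw [hsdef]
    field_simp
  have hNexp : 2 * (H:ℝ) * W = Real.exp (2 * t ^ 2) := by
    rw [ht2, hL, show 2 * (Real.log (2 * (H:ℝ) * W) / 2) = Real.log (2 * (H:ℝ) * W) by ring,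
      Real.exp_log hNpos]
  rw [h2s, hNexp, ← Real.exp_add]
  calc Real.exp (2 * t ^ 2 + -(2 * s ^ 2)) ≤ Real.exp (Real.log p) :=
        Real.exp_le_exp.mpr (by linarith)
    _ = p := Real.exp_log hp

/-- Proposition 1, max-pooling case: if `(b-a) sqrt(log(sqrt(2HW))) / γ ≤ p`,
then the probability that the max-pooled disturbance `|max_{i,j} d i j|`
exceeds `γ` is at most `p`. -/
theorem max_pooling_perturbation_bound
    {Ω : Type*} [MeasurableSpace Ω] (μ : Measure Ω) [IsProbabilityMeasure μ]
    (H W : ℕ) (hH : 1 ≤ H) (hW : 1 ≤ W)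
    (d : Fin H → Fin W → Ω → ℝ)
    (hmeas : ∀ i j, Measurable (d i j))
    (hmean : ∀ i j, ∫ ω, d i j ω ∂μ = 0)
    (a b : ℝ) (hab : a < b)
    (hbound : ∀ i j, ∀ᵐ ω ∂μ, a ≤ d i j ω ∧ d i j ω ≤ b)
    (γ : ℝ) (hγ : 0 < γ) (p : ℝ) (hp0 : 0 ≤ p) (hp1 : p ≤ 1)
    (hcond : (b - a) * Real.sqrt (Real.log (Real.sqrt (2 * H * W))) / γ ≤ p) :
    μ {ω | γ ≤ |⨆ i : Fin H, ⨆ j : Fin W, d i j ω|} ≤ ENNReal.ofReal p := by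
  haveI : NeZero H := ⟨by omega⟩
  haveI : NeZero W := ⟨by omega⟩
  set E : ℝ := Real.exp (-(2 * γ ^ 2 / (b - a) ^ 2)) with hE
  set c : ℝ≥0∞ := ENNReal.ofReal E with hc
  -- upper tails
  have hA : ∀ i j, μ {ω | γ ≤ d i j ω} ≤ c :=
    fun i j => tail_bound μ (hmeas i j) (hmean i j) hab (hbound i j) hγ
  -- lower tails
  have hB : ∀ i j, μ {ω | γ ≤ -(d i j ω)} ≤ c := by
    intro i j
    have hmean' : ∫ ω, -(d i j ω) ∂μ = 0 := by rw [integral_neg, hmean i j, neg_zero]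
    have hbound' : ∀ᵐ ω ∂μ, -b ≤ -(d i j ω) ∧ -(d i j ω) ≤ -a := by
      filter_upwards [hbound i j] with ω ⟨h1, h2⟩
      constructor <;> linarith
    have := tail_bound μ (hmeas i j).neg hmean' (show -b < -a by linarith) hbound' hγ
    rwa [show -a - -b = b - a by ring] at this
  -- inclusion in union of tail events
  have hsub : {ω | γ ≤ |⨆ i : Fin H, ⨆ j : Fin W, d i j ω|} ⊆
      ⋃ i : Fin H, ⋃ j : Fin W, ({ω | γ ≤ d i j ω} ∪ {ω | γ ≤ -(d i j ω)}) := by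
    intro ω hω
    simp only [Set.mem_setOf_eq] at hω
    set S : ℝ := ⨆ i : Fin H, ⨆ j : Fin W, d i j ω with hS
    rcases le_abs.mp hω with hpos | hneg
    · obtain ⟨i0, hi0⟩ := Finite.exists_max (fun i : Fin H => ⨆ j : Fin W, d i j ω)
      obtain ⟨j0, hj0⟩ := Finite.exists_max (fun j : Fin W => d i0 j ω)
      have hSle : S ≤ d i0 j0 ω :=
        ciSup_le fun i => (hi0 i).trans (ciSup_le hj0)
      exact Set.mem_iUnion.mpr ⟨i0, Set.mem_iUnion.mpr ⟨j0, Or.inl (hpos.trans hSle)⟩⟩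
    · set i0 : Fin H := 0
      set j0 : Fin W := 0
      have h1 : d i0 j0 ω ≤ ⨆ j : Fin W, d i0 j ω :=
        le_ciSup (f := fun j : Fin W => d i0 j ω) (Set.Finite.bddAbove (Set.finite_range _)) j0
      have h2 : (⨆ j : Fin W, d i0 j ω) ≤ S :=
        le_ciSup (f := fun i : Fin H => ⨆ j : Fin W, d i j ω)
          (Set.Finite.bddAbove (Set.finite_range _)) i0
      have : γ ≤ -(d i0 j0 ω) := by
        have := h1.trans h2
        linarith
      exact Set.mem_iUnion.mpr ⟨i0, Set.mem_iUnion.mpr ⟨j0, Or.inr this⟩⟩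
  have hfin : 2 * H * W * E ≤ p := arith_bound H W hH hW hab hγ hp1 hp0 hcond
  calc μ {ω | γ ≤ |⨆ i : Fin H, ⨆ j : Fin W, d i j ω|}
      ≤ μ (⋃ i : Fin H, ⋃ j : Fin W, ({ω | γ ≤ d i j ω} ∪ {ω | γ ≤ -(d i j ω)})) :=
        measure_mono hsub
    _ ≤ ∑' i : Fin H, ∑' j : Fin W, (c + c) := by
        refine (measure_iUnion_le _).trans (ENNReal.tsum_le_tsum fun i => ?_)
        refine (measure_iUnion_le _).trans (ENNReal.tsum_le_tsum fun j => ?_)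
        exact (measure_union_le _ _).trans (add_le_add (hA i j) (hB i j))
    _ = (H : ℝ≥0∞) * ((W : ℝ≥0∞) * (c + c)) := by
        simp [tsum_fintype, Finset.sum_const, Finset.card_univ, mul_comm]
        ring
    _ = ENNReal.ofReal (2 * H * W * E) := by
        rw [hc, ← ENNReal.ofReal_add (Real.exp_nonneg _) (Real.exp_nonneg _),
          ← ENNReal.ofReal_natCast W, ← ENNReal.ofReal_natCast H,
          ← ENNReal.ofReal_mul (by positivity),
          ← ENNReal.ofReal_mul (by positivity)]
        congr 1
        ring
    _ ≤ ENNReal.ofReal p := ENNReal.ofReal_le_ofReal hfin
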